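/- Let μ be a probability measure on ℝ with a Hall-class Pareto-type tail with extreme value index γ > 0 and parameters c₀ > 0, c₁ ∈ ℝ, β > 0. Then ω^{1/γ} · ∫_{(ω,∞)} ( γ^{-1} log(y/ω) − 1 )² dμ(y) → c₀ as ω → ∞; i.e. the truncated second moment of the score γ^{-1} log(Y/ω) − 1, normalized by the tail probability, converges to 1. -/

import Mathlib

open MeasureTheory Filter Topology

lemma levelset_aux {ω γ t : ℝ} (hω : 0 < ω) (hγ : 0 < γ) (ht : 0 < t) :
    {y : ℝ | t < γ⁻¹ * Real.log (y / ω)} ∩ Set.Ioi ω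
      = Set.Ioi (ω * Real.exp (γ * t)) := by
  ext y
  simp only [Set.mem_inter_iff, Set.mem_setOf_eq, Set.mem_Ioi]
  constructor
  · rintro ⟨h1, h2⟩
    have hyω : 0 < y / ω := div_pos (hω.trans h2) hω
    have h3 : γ * t < Real.log (y / ω) := by
      have := (mul_lt_mul_iff_right₀ hγ).mpr h1
      rwa [← mul_assoc, mul_inv_cancel₀ hγ.ne', one_mul] at this
    have h4 := (Real.lt_log_iff_exp_lt hyω).mp h3
    calc ω * Real.exp (γ * t) < ω * (y / ω) := (mul_lt_mul_iff_right₀ hω).mpr h4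
      _ = y := by field_simp
  · intro h
    have h1 : Real.exp (γ * t) < y / ω := by
      rw [lt_div_iff₀ hω]; linarith [h, mul_comm ω (Real.exp (γ * t))]
    have hy : ω < y :=
      lt_of_le_of_lt (le_mul_of_one_le_right hω.le
        (Real.one_le_exp (mul_nonneg hγ.le ht.le))) h
    refine ⟨?_, hy⟩
    have h2 : γ * t < Real.log (y / ω) :=
      (Real.lt_log_iff_exp_lt (div_pos (hω.trans hy) hω)).mpr h1
    have h3 := (mul_lt_mul_iff_right₀ (inv_pos.mpr hγ)).mpr h2
    rwa [← mul_assoc, inv_mul_cancel₀ hγ.ne', one_mul] at h3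

lemma u_meas (ω γ : ℝ) : Measurable (fun y : ℝ => γ⁻¹ * Real.log (y / ω)) :=
  (Real.measurable_log.comp (measurable_id.div_const ω)).const_mul γ⁻¹

lemma u_nonneg_ae (μ : Measure ℝ) {ω γ : ℝ} (hω : 0 < ω) (hγ : 0 < γ) :
    0 ≤ᵐ[μ.restrict (Set.Ioi ω)] fun y : ℝ => γ⁻¹ * Real.log (y / ω) := by
  filter_upwards [self_mem_ae_restrict measurableSet_Ioi] with y hy
  have h1 : (1:ℝ) ≤ y / ω := (le_div_iff₀ hω).mpr (by simpa using (le_of_lt hy))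
  exact mul_nonneg (inv_nonneg.mpr hγ.le) (Real.log_nonneg h1)

lemma layercake_one (μ : Measure ℝ) [IsFiniteMeasure μ] {ω γ : ℝ} (hω : 0 < ω) (hγ : 0 < γ) :
    ∫⁻ y in Set.Ioi ω, ENNReal.ofReal (γ⁻¹ * Real.log (y / ω)) ∂μ
      = ∫⁻ t in Set.Ioi 0, μ (Set.Ioi (ω * Real.exp (γ * t))) := by
  rw [lintegral_eq_lintegral_meas_lt _ (u_nonneg_ae μ hω hγ) (u_meas ω γ).aemeasurable]
  refine setLIntegral_congr_fun measurableSet_Ioi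
    (fun t ht => ?_)
  rw [Measure.restrict_apply (measurableSet_lt measurable_const (u_meas ω γ)),
    levelset_aux hω hγ ht]

lemma layercake_two (μ : Measure ℝ) [IsFiniteMeasure μ] {ω γ : ℝ} (hω : 0 < ω) (hγ : 0 < γ) :
    ∫⁻ y in Set.Ioi ω, ENNReal.ofReal ((γ⁻¹ * Real.log (y / ω)) ^ 2) ∂μ
      = ∫⁻ t in Set.Ioi 0,
          μ (Set.Ioi (ω * Real.exp (γ * t))) * ENNReal.ofReal (2 * t) := by
  have key := lintegral_comp_eq_lintegral_meas_lt_mul (μ.restrict (Set.Ioi ω))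
      (f := fun y : ℝ => γ⁻¹ * Real.log (y / ω)) (g := fun t => 2 * t)
      (u_nonneg_ae μ hω hγ) (u_meas ω γ).aemeasurable
      (fun t _ => (continuous_const.mul continuous_id).intervalIntegrable 0 t)
      (by filter_upwards [self_mem_ae_restrict measurableSet_Ioi] with t ht
          exact le_of_lt (by simpa using mul_pos two_pos (show (0:ℝ) < t from ht)))
  have hsq : ∀ y : ℝ, (∫ t in (0:ℝ)..(γ⁻¹ * Real.log (y / ω)), 2 * t)
      = (γ⁻¹ * Real.log (y / ω)) ^ 2 := by
    intro y
    rw [intervalIntegral.integral_const_mul, integral_id]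
    ring
  simp_rw [hsq] at key
  rw [key]
  refine setLIntegral_congr_fun measurableSet_Ioi
    (fun t ht => ?_)
  rw [Measure.restrict_apply (measurableSet_lt measurable_const (u_meas ω γ)),
    levelset_aux hω hγ ht]

/-- for a Hall-class Pareto-type tail, the truncated second
moment of the score satisfies
`ω^{1/γ} ∫_{(ω,∞)} (γ⁻¹ log(y/ω) − 1)² dμ → c₀`. -/
theorem hall_tail_score_second_moment
    (μ : Measure ℝ) [IsProbabilityMeasure μ]
    (γ c₀ c₁ β : ℝ) (hγ : 0 < γ) (hc₀ : 0 < c₀) (hβ : 0 < β) (r : ℝ → ℝ)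
    (hS : ∀ᶠ y in atTop,
      (μ (Set.Ioi y)).toReal = y ^ (-(1 / γ)) * (c₀ + c₁ * y ^ (-β) + r y))
    (hr : Tendsto (fun y : ℝ => y ^ β * r y) atTop (𝓝 0)) :
    Tendsto (fun ω : ℝ =>
        ω ^ (1 / γ) * ∫ y in Set.Ioi ω, (γ⁻¹ * Real.log (y / ω) - 1) ^ 2 ∂μ)
      atTop (𝓝 c₀) := by
  set S : ℝ → ℝ := fun y => (μ (Set.Ioi y)).toReal with hSdef
  set g : ℝ → ℝ := fun y => c₀ + c₁ * y ^ (-β) + r y with hgdef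
  -- basic facts about S
  have hSnn : ∀ y, 0 ≤ S y := fun y => ENNReal.toReal_nonneg
  have hSanti : Antitone S := fun a b hab =>
    (ENNReal.toReal_le_toReal (measure_ne_top μ _) (measure_ne_top μ _)).mpr
      (measure_mono (Set.Ioi_subset_Ioi hab))
  -- g → c₀
  have hr0 : Tendsto r atTop (𝓝 0) := by
    have h1 : Tendsto (fun y : ℝ => y ^ (-β) * (y ^ β * r y)) atTop (𝓝 (0 * 0)) :=
      (tendsto_rpow_neg_atTop hβ).mul hr
    rw [zero_mul] at h1
    refine h1.congr' ?_
    filter_upwards [eventually_gt_atTop (0:ℝ)] with y hy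
    rw [← mul_assoc, ← Real.rpow_add hy, neg_add_cancel, Real.rpow_zero, one_mul]
  have hgc : Tendsto g atTop (𝓝 c₀) := by
    have h2 : Tendsto (fun y : ℝ => c₀ + c₁ * y ^ (-β) + r y) atTop
        (𝓝 (c₀ + c₁ * 0 + 0)) :=
      (tendsto_const_nhds.add (tendsto_const_nhds.mul (tendsto_rpow_neg_atTop hβ))).add hr0
    simpa using h2
  set M : ℝ := c₀ + 1 with hMdef
  have hM : 0 < M := by positivity
  have hgM : ∀ᶠ y in atTop, |g y| ≤ M := by
    have h1 : ∀ᶠ y in atTop, |g y - c₀| < 1 := by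
      have := Metric.tendsto_nhds.mp hgc 1 one_pos
      simpa [Real.dist_eq] using this
    filter_upwards [h1] with y hy
    have h2 : |g y| - |c₀| ≤ |g y - c₀| := abs_sub_abs_le_abs_sub _ _
    rw [abs_of_pos hc₀] at h2
    rw [hMdef]
    linarith
  obtain ⟨Y₀, hY₀'⟩ := eventually_atTop.mp ((hS.and hgM).and (eventually_ge_atTop (1:ℝ)))
  have hY₀ : ∀ b, b ≥ Y₀ → ((S b = b ^ (-(1/γ)) * g b ∧ |g b| ≤ M) ∧ 1 ≤ b) := hY₀'
  -- key identity
  have hyY : ∀ ω, Y₀ ≤ ω → ∀ t : ℝ, 0 ≤ t → Y₀ ≤ ω * Real.exp (γ * t) := by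
    intro ω hω t ht
    have hω1 : (1:ℝ) ≤ ω := (hY₀ ω hω).2
    have hωpos : 0 < ω := zero_lt_one.trans_le hω1
    exact le_trans hω (le_mul_of_one_le_right hωpos.le
      (Real.one_le_exp (mul_nonneg hγ.le ht)))
  have key : ∀ ω, Y₀ ≤ ω → ∀ t : ℝ, 0 ≤ t →
      ω ^ (1/γ) * S (ω * Real.exp (γ * t))
        = Real.exp (-t) * g (ω * Real.exp (γ * t)) := by
    intro ω hω t ht
    have hω1 : (1:ℝ) ≤ ω := (hY₀ ω hω).2
    have hωpos : 0 < ω := zero_lt_one.trans_le hω1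
    have hSeq := (hY₀ _ (hyY ω hω t ht)).1.1
    have e1 : ω ^ (1/γ) * (ω * Real.exp (γ * t)) ^ (-(1/γ)) = Real.exp (-t) := by
      have h2 : γ * t * -(1/γ) = -t := by
        field_simp
      rw [Real.mul_rpow hωpos.le (Real.exp_pos _).le, ← Real.exp_mul, h2, ← mul_assoc,
        ← Real.rpow_add hωpos]
      rw [add_neg_cancel, Real.rpow_zero, one_mul]
    calc ω ^ (1/γ) * S (ω * Real.exp (γ * t))
        = (ω ^ (1/γ) * (ω * Real.exp (γ * t)) ^ (-(1/γ)))
            * g (ω * Real.exp (γ * t)) := by rw [hSeq]; ring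
      _ = Real.exp (-t) * g (ω * Real.exp (γ * t)) := by rw [e1]
  -- measurability in t
  have hφmeas : ∀ ω : ℝ, 0 < ω → Measurable (fun t => S (ω * Real.exp (γ * t))) := by
    intro ω hω
    refine Antitone.measurable fun a b hab => hSanti ?_
    exact mul_le_mul_of_nonneg_left (Real.exp_le_exp.mpr
      (mul_le_mul_of_nonneg_left hab hγ.le)) hω.le
  -- integrability of t ↦ S(ω e^{γt}) and t ↦ S(ω e^{γt}) * (2t) on Ioi 0
  have hexp_int : IntegrableOn (fun t : ℝ => Real.exp (-t)) (Set.Ioi 0) := by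
    simpa using exp_neg_integrableOn_Ioi (0:ℝ) one_pos
  have hte_int : IntegrableOn (fun t : ℝ => Real.exp (-t) * t) (Set.Ioi 0) := by
    have h := Real.GammaIntegral_convergent (by norm_num : (0:ℝ) < 2)
    have h21 : (2:ℝ) - 1 = 1 := by norm_num
    rw [h21] at h
    simpa [Real.rpow_one] using h
  have hGamma : ∫ t in Set.Ioi 0, Real.exp (-t) * t = 1 := by
    have h := Real.Gamma_eq_integral (by norm_num : (0:ℝ) < 2)
    rw [Real.Gamma_two] at h
    have h2 : ((2:ℝ) - 1) = 1 := by norm_num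
    rw [h2] at h
    simpa [Real.rpow_one] using h.symm
  have hSbound : ∀ ω, Y₀ ≤ ω → ∀ t ∈ Set.Ioi (0:ℝ),
      ‖S (ω * Real.exp (γ * t))‖ ≤ (ω ^ (-(1/γ)) * M) * Real.exp (-t) := by
    intro ω hω t ht
    have hω1 : (1:ℝ) ≤ ω := (hY₀ ω hω).2
    have hωpos : 0 < ω := zero_lt_one.trans_le hω1
    have hk := key ω hω t (le_of_lt ht)
    have hgb := (hY₀ _ (hyY ω hω t (le_of_lt ht))).1.2
    have hp : (0:ℝ) < ω ^ (1/γ) := Real.rpow_pos_of_pos hωpos _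
    rw [Real.norm_eq_abs, abs_of_nonneg (hSnn _)]
    have : S (ω * Real.exp (γ * t)) = ω ^ (-(1/γ)) * (Real.exp (-t) * g (ω * Real.exp (γ * t))) := by
      rw [← hk, ← mul_assoc, Real.rpow_neg hωpos.le, inv_mul_cancel₀ hp.ne', one_mul]
    rw [this]
    have hgle : g (ω * Real.exp (γ * t)) ≤ M := (abs_le.mp hgb).2
    have h0 : (0:ℝ) ≤ ω ^ (-(1/γ)) := (Real.rpow_pos_of_pos hωpos _).le
    calc ω ^ (-(1/γ)) * (Real.exp (-t) * g (ω * Real.exp (γ * t)))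
        ≤ ω ^ (-(1/γ)) * (Real.exp (-t) * M) :=
          mul_le_mul_of_nonneg_left
            (mul_le_mul_of_nonneg_left hgle (Real.exp_pos _).le) h0
      _ = (ω ^ (-(1/γ)) * M) * Real.exp (-t) := by ring
  have hSint : ∀ ω, Y₀ ≤ ω →
      IntegrableOn (fun t : ℝ => S (ω * Real.exp (γ * t))) (Set.Ioi 0) := by
    intro ω hω
    have hωpos : 0 < ω := zero_lt_one.trans_le (hY₀ ω hω).2
    refine Integrable.mono' (hexp_int.const_mul (ω ^ (-(1/γ)) * M))
      ((hφmeas ω hωpos).aestronglyMeasurable) ?_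
    filter_upwards [self_mem_ae_restrict measurableSet_Ioi] with t ht
    exact hSbound ω hω t ht
  have hS2int : ∀ ω, Y₀ ≤ ω →
      IntegrableOn (fun t : ℝ => S (ω * Real.exp (γ * t)) * (2 * t)) (Set.Ioi 0) := by
    intro ω hω
    have hωpos : 0 < ω := zero_lt_one.trans_le (hY₀ ω hω).2
    refine Integrable.mono' (hte_int.const_mul (2 * (ω ^ (-(1/γ)) * M)))
      (((hφmeas ω hωpos).mul (measurable_const.mul measurable_id)).aestronglyMeasurable) ?_
    filter_upwards [self_mem_ae_restrict measurableSet_Ioi] with t ht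
    have h1 := hSbound ω hω t ht
    rw [Real.norm_eq_abs, abs_of_nonneg (hSnn _)] at h1
    have ht0 : (0:ℝ) < t := ht
    rw [Real.norm_eq_abs, abs_of_nonneg (mul_nonneg (hSnn _) (by positivity))]
    calc S (ω * Real.exp (γ * t)) * (2 * t)
        ≤ ((ω ^ (-(1/γ)) * M) * Real.exp (-t)) * (2 * t) :=
          mul_le_mul_of_nonneg_right h1 (by positivity)
      _ = 2 * (ω ^ (-(1/γ)) * M) * (Real.exp (-t) * t) := by ring
  -- conversion of lintegrals to real integrals
  have hconv1 : ∀ ω, Y₀ ≤ ω →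
      ∫⁻ t in Set.Ioi 0, μ (Set.Ioi (ω * Real.exp (γ * t)))
        = ENNReal.ofReal (∫ t in Set.Ioi 0, S (ω * Real.exp (γ * t))) := by
    intro ω hω
    have h1 : ∫⁻ t in Set.Ioi 0, μ (Set.Ioi (ω * Real.exp (γ * t)))
        = ∫⁻ t in Set.Ioi 0, ENNReal.ofReal (S (ω * Real.exp (γ * t))) :=
      lintegral_congr fun t => (ENNReal.ofReal_toReal (measure_ne_top μ _)).symm
    rw [h1]
    exact (MeasureTheory.ofReal_integral_eq_lintegral_ofReal (hSint ω hω)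
      (Filter.Eventually.of_forall fun t => hSnn _)).symm
  have hconv2 : ∀ ω, Y₀ ≤ ω →
      ∫⁻ t in Set.Ioi 0, μ (Set.Ioi (ω * Real.exp (γ * t))) * ENNReal.ofReal (2 * t)
        = ENNReal.ofReal (∫ t in Set.Ioi 0, S (ω * Real.exp (γ * t)) * (2 * t)) := by
    intro ω hω
    have h1 : ∫⁻ t in Set.Ioi 0, μ (Set.Ioi (ω * Real.exp (γ * t))) * ENNReal.ofReal (2 * t)
        = ∫⁻ t in Set.Ioi 0, ENNReal.ofReal (S (ω * Real.exp (γ * t)) * (2 * t)) := by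
      refine setLIntegral_congr_fun measurableSet_Ioi
        (fun t ht => ?_)
      rw [ENNReal.ofReal_mul (hSnn _)]
      congr 1
      exact (ENNReal.ofReal_toReal (measure_ne_top μ _)).symm
    rw [h1]
    refine (MeasureTheory.ofReal_integral_eq_lintegral_ofReal (hS2int ω hω) ?_).symm
    filter_upwards [self_mem_ae_restrict measurableSet_Ioi] with t ht
    have ht0 : (0:ℝ) < t := ht
    exact mul_nonneg (hSnn _) (by positivity)
  -- Bochner integrals of u and u²
  have hE1 : ∀ ω, Y₀ ≤ ω →
      ∫ y in Set.Ioi ω, γ⁻¹ * Real.log (y / ω) ∂μ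
        = ∫ t in Set.Ioi 0, S (ω * Real.exp (γ * t)) := by
    intro ω hω
    have hωpos : 0 < ω := zero_lt_one.trans_le (hY₀ ω hω).2
    rw [MeasureTheory.integral_eq_lintegral_of_nonneg_ae (u_nonneg_ae μ hωpos hγ)
      (u_meas ω γ).aestronglyMeasurable, layercake_one μ hωpos hγ, hconv1 ω hω,
      ENNReal.toReal_ofReal]
    exact setIntegral_nonneg measurableSet_Ioi fun t _ => hSnn _
  have hE2 : ∀ ω, Y₀ ≤ ω →
      ∫ y in Set.Ioi ω, (γ⁻¹ * Real.log (y / ω)) ^ 2 ∂μ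
        = ∫ t in Set.Ioi 0, S (ω * Real.exp (γ * t)) * (2 * t) := by
    intro ω hω
    have hωpos : 0 < ω := zero_lt_one.trans_le (hY₀ ω hω).2
    have hnn2 : 0 ≤ᵐ[μ.restrict (Set.Ioi ω)] fun y : ℝ => (γ⁻¹ * Real.log (y / ω)) ^ 2 :=
      Filter.Eventually.of_forall fun y => sq_nonneg _
    rw [MeasureTheory.integral_eq_lintegral_of_nonneg_ae hnn2
      ((u_meas ω γ).pow_const 2).aestronglyMeasurable, layercake_two μ hωpos hγ,
      hconv2 ω hω, ENNReal.toReal_ofReal]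
    refine setIntegral_nonneg measurableSet_Ioi fun t ht => ?_
    have ht0 : (0:ℝ) < t := ht
    exact mul_nonneg (hSnn _) (by positivity)
  -- integrability of u and u² w.r.t. μ.restrict (Ioi ω)
  have hu2int : ∀ ω, Y₀ ≤ ω →
      Integrable (fun y : ℝ => (γ⁻¹ * Real.log (y / ω)) ^ 2) (μ.restrict (Set.Ioi ω)) := by
    intro ω hω
    have hωpos : 0 < ω := zero_lt_one.trans_le (hY₀ ω hω).2
    refine ⟨((u_meas ω γ).pow_const 2).aestronglyMeasurable, ?_⟩
    rw [hasFiniteIntegral_iff_ofReal (Filter.Eventually.of_forall fun y => sq_nonneg _),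
      layercake_two μ hωpos hγ, hconv2 ω hω]
    exact ENNReal.ofReal_lt_top
  have huint : ∀ ω, Y₀ ≤ ω →
      Integrable (fun y : ℝ => γ⁻¹ * Real.log (y / ω)) (μ.restrict (Set.Ioi ω)) := by
    intro ω hω
    refine Integrable.mono' ((hu2int ω hω).add (integrable_const 1))
      (u_meas ω γ).aestronglyMeasurable ?_
    refine Filter.Eventually.of_forall fun y => ?_
    show ‖γ⁻¹ * Real.log (y / ω)‖ ≤ (γ⁻¹ * Real.log (y / ω)) ^ 2 + 1
    rw [Real.norm_eq_abs]
    nlinarith [sq_abs (γ⁻¹ * Real.log (y / ω)), abs_nonneg (γ⁻¹ * Real.log (y / ω)),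
      sq_nonneg (|γ⁻¹ * Real.log (y / ω)| - 1)]
  -- splitting the target integral
  have hsplit : ∀ ω, Y₀ ≤ ω →
      ∫ y in Set.Ioi ω, (γ⁻¹ * Real.log (y / ω) - 1) ^ 2 ∂μ
        = (∫ y in Set.Ioi ω, (γ⁻¹ * Real.log (y / ω)) ^ 2 ∂μ)
          - 2 * (∫ y in Set.Ioi ω, γ⁻¹ * Real.log (y / ω) ∂μ) + S ω := by
    intro ω hω
    have h1 : ∀ y : ℝ, (γ⁻¹ * Real.log (y / ω) - 1) ^ 2
        = (γ⁻¹ * Real.log (y / ω)) ^ 2 - (2 * (γ⁻¹ * Real.log (y / ω)) - 1) := by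
      intro y; ring
    have hg2 : Integrable (fun y : ℝ => 2 * (γ⁻¹ * Real.log (y / ω)) - 1)
        (μ.restrict (Set.Ioi ω)) := ((huint ω hω).const_mul 2).sub (integrable_const 1)
    simp_rw [h1]
    rw [integral_sub (hu2int ω hω) hg2,
      integral_sub ((huint ω hω).const_mul 2) (integrable_const 1),
      integral_const_mul, setIntegral_const]
    have : μ.real (Set.Ioi ω) • (1:ℝ) = S ω := by simp [hSdef, measureReal_def]
    rw [this]; ring
  -- the three limits
  have hωexp : ∀ t : ℝ, Tendsto (fun ω : ℝ => ω * Real.exp (γ * t)) atTop atTop :=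
    fun t => Tendsto.atTop_mul_const (Real.exp_pos _) tendsto_id
  have hDCT1 : Tendsto (fun ω : ℝ => ∫ t in Set.Ioi 0, ω ^ (1/γ) * S (ω * Real.exp (γ * t)))
      atTop (𝓝 c₀) := by
    have hlim := MeasureTheory.tendsto_integral_filter_of_dominated_convergence
      (μ := volume.restrict (Set.Ioi 0)) (l := atTop)
      (F := fun ω t => ω ^ (1/γ) * S (ω * Real.exp (γ * t)))
      (f := fun t => c₀ * Real.exp (-t)) (bound := fun t => M * Real.exp (-t))
      ?_ ?_ (hexp_int.const_mul M) ?_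
    · have : ∫ t in Set.Ioi 0, c₀ * Real.exp (-t) = c₀ := by
        rw [integral_const_mul, integral_exp_neg_Ioi_zero, mul_one]
      rwa [this] at hlim
    · filter_upwards [eventually_ge_atTop Y₀] with ω hω
      have hωpos : 0 < ω := zero_lt_one.trans_le (hY₀ ω hω).2
      exact ((hφmeas ω hωpos).const_mul _).aestronglyMeasurable
    · filter_upwards [eventually_ge_atTop Y₀] with ω hω
      filter_upwards [self_mem_ae_restrict measurableSet_Ioi] with t ht
      rw [key ω hω t (le_of_lt ht), Real.norm_eq_abs, abs_mul,
        abs_of_pos (Real.exp_pos _), mul_comm M (Real.exp (-t))]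
      exact mul_le_mul_of_nonneg_left ((hY₀ _ (hyY ω hω t (le_of_lt ht))).1.2)
        (Real.exp_pos _).le
    · filter_upwards [self_mem_ae_restrict measurableSet_Ioi] with t ht
      have h1 : Tendsto (fun ω : ℝ => Real.exp (-t) * g (ω * Real.exp (γ * t))) atTop
          (𝓝 (Real.exp (-t) * c₀)) :=
        tendsto_const_nhds.mul (hgc.comp (hωexp t))
      rw [mul_comm (Real.exp (-t)) c₀] at h1
      refine h1.congr' ?_
      filter_upwards [eventually_ge_atTop Y₀] with ω hω
      exact (key ω hω t (le_of_lt ht)).symm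
  have hDCT2 : Tendsto (fun ω : ℝ =>
      ∫ t in Set.Ioi 0, (ω ^ (1/γ) * S (ω * Real.exp (γ * t))) * (2 * t))
      atTop (𝓝 (2 * c₀)) := by
    have hlim := MeasureTheory.tendsto_integral_filter_of_dominated_convergence
      (μ := volume.restrict (Set.Ioi 0)) (l := atTop)
      (F := fun ω t => (ω ^ (1/γ) * S (ω * Real.exp (γ * t))) * (2 * t))
      (f := fun t => (c₀ * Real.exp (-t)) * (2 * t))
      (bound := fun t => (2 * M) * (Real.exp (-t) * t))
      ?_ ?_ (hte_int.const_mul (2 * M)) ?_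
    · have : ∫ t in Set.Ioi 0, (c₀ * Real.exp (-t)) * (2 * t) = 2 * c₀ := by
        rw [show (fun t : ℝ => (c₀ * Real.exp (-t)) * (2 * t))
            = fun t : ℝ => (2 * c₀) * (Real.exp (-t) * t) from funext fun t => by ring,
          integral_const_mul, hGamma, mul_one]
      rwa [this] at hlim
    · filter_upwards [eventually_ge_atTop Y₀] with ω hω
      have hωpos : 0 < ω := zero_lt_one.trans_le (hY₀ ω hω).2
      exact (((hφmeas ω hωpos).const_mul _).mul
        (measurable_const.mul measurable_id)).aestronglyMeasurable
    · filter_upwards [eventually_ge_atTop Y₀] with ω hω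
      filter_upwards [self_mem_ae_restrict measurableSet_Ioi] with t ht
      have ht0 : (0:ℝ) < t := ht
      rw [key ω hω t (le_of_lt ht), Real.norm_eq_abs, abs_mul, abs_mul,
        abs_of_pos (Real.exp_pos _), abs_of_pos (by positivity : (0:ℝ) < 2 * t)]
      have hgb := (hY₀ _ (hyY ω hω t (le_of_lt ht))).1.2
      calc Real.exp (-t) * |g (ω * Real.exp (γ * t))| * (2 * t)
          ≤ Real.exp (-t) * M * (2 * t) := by
            refine mul_le_mul_of_nonneg_right
              (mul_le_mul_of_nonneg_left hgb (Real.exp_pos _).le) (by positivity)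
        _ = (2 * M) * (Real.exp (-t) * t) := by ring
    · filter_upwards [self_mem_ae_restrict measurableSet_Ioi] with t ht
      have h1 : Tendsto (fun ω : ℝ =>
          (Real.exp (-t) * g (ω * Real.exp (γ * t))) * (2 * t)) atTop
          (𝓝 ((Real.exp (-t) * c₀) * (2 * t))) :=
        (tendsto_const_nhds.mul (hgc.comp (hωexp t))).mul_const _
      rw [mul_comm (Real.exp (-t)) c₀] at h1
      refine h1.congr' ?_
      filter_upwards [eventually_ge_atTop Y₀] with ω hω
      rw [key ω hω t (le_of_lt ht)]
  have hA0 : Tendsto (fun ω : ℝ => ω ^ (1/γ) * S ω) atTop (𝓝 c₀) := by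
    refine (hgc.congr' ?_)
    filter_upwards [eventually_ge_atTop Y₀] with ω hω
    have hω1 : (1:ℝ) ≤ ω := (hY₀ ω hω).2
    have hωpos : 0 < ω := zero_lt_one.trans_le hω1
    have hSeq := (hY₀ ω hω).1.1
    rw [hSeq, ← mul_assoc, ← Real.rpow_add hωpos]
    norm_num
  -- final assembly
  have hmain : Tendsto (fun ω : ℝ =>
      (∫ t in Set.Ioi 0, (ω ^ (1/γ) * S (ω * Real.exp (γ * t))) * (2 * t))
        - 2 * (∫ t in Set.Ioi 0, ω ^ (1/γ) * S (ω * Real.exp (γ * t)))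
        + ω ^ (1/γ) * S ω) atTop (𝓝 c₀) := by
    have := (hDCT2.sub (hDCT1.const_mul 2)).add hA0
    have h2 : 2 * c₀ - 2 * c₀ + c₀ = c₀ := by ring
    rwa [h2] at this
  refine hmain.congr' ?_
  filter_upwards [eventually_ge_atTop Y₀] with ω hω
  have hωpos : 0 < ω := zero_lt_one.trans_le (hY₀ ω hω).2
  have hA : ∫ t in Set.Ioi 0, (ω ^ (1/γ) * S (ω * Real.exp (γ * t))) * (2 * t)
      = ω ^ (1/γ) * ∫ t in Set.Ioi 0, S (ω * Real.exp (γ * t)) * (2 * t) := by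
    rw [← integral_const_mul]
    exact integral_congr_ae (Filter.Eventually.of_forall fun t => by ring)
  have hB : ∫ t in Set.Ioi 0, ω ^ (1/γ) * S (ω * Real.exp (γ * t))
      = ω ^ (1/γ) * ∫ t in Set.Ioi 0, S (ω * Real.exp (γ * t)) :=
    integral_const_mul _ _
  rw [hsplit ω hω, hE1 ω hω, hE2 ω hω, hA, hB]
  ring
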